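/- arXiv:1906.08446 — 4 statements merged into one kernel-verified Lean document; each statement's English description precedes it below -/
import Mathlib

section
/- Let Λ be a countable set, P a substochastic matrix on Λ, U ⊆ Λ, V : Λ → (0,∞), ρ ∈ (0,1), C > 0 and K > 0 such that: (i) Σ_{y∈Λ} P(x,y)V(y) ≤ ρ V(x) for every x ∉ U; (ii) Σ_{y∈Λ} P(x,y)V(y) ≤ C V(x) for every x ∈ Λ; and (iii) V(x) ≥ K for every x ∉ U. Then for every x ∈ Λ with V(x) ≤ K and every n ≥ 1, Σ_{x_1,…,x_n ∈ Λ∖U} P(x,x_1)P(x_1,x_2)⋯P(x_{n−1},x_n) ≤ C ρ^{n−1}. (In Markov-chain language: the probability, starting from x, of surviving n steps while avoiding U is at most Cρ^{n−1}.) -/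
open Filter Topology

open Classical in
/-- `survive P U n x = Σ_{x₁,…,xₙ ∈ Λ∖U} P(x,x₁)P(x₁,x₂)⋯P(x_{n−1},xₙ)`:
the probability, starting from `x`, of surviving `n` steps of the (sub-Markovian) chain
with transition matrix `P` while avoiding the set `U`. -/
noncomputable def survive {Λ : Type*} (P : Λ → Λ → ℝ) (U : Set Λ) : ℕ → Λ → ℝ
  | 0 => fun _ => 1
  | n + 1 => fun x => ∑' y, (if y ∈ U then 0 else P x y) * survive P U n y

open Classical in
lemma survive_nonneg {Λ : Type*} (P : Λ → Λ → ℝ) (U : Set Λ)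
    (hP0 : ∀ x y, 0 ≤ P x y) : ∀ n x, 0 ≤ survive P U n x := by
  intro n
  induction n with
  | zero => intro x; simp [survive]
  | succ n ih =>
    intro x
    apply tsum_nonneg
    intro y
    apply mul_nonneg _ (ih y)
    split <;> simp [hP0]

/-- under a Lyapunov drift condition outside `U`, the probability of
surviving `n` steps while avoiding `U`, starting from a point with `V(x) ≤ K`,
is at most `C ρ^{n−1}`. -/
theorem survival_avoiding_U_bound
    {Λ : Type*} [Countable Λ]
    (P : Λ → Λ → ℝ)
    -- substochastic
    (hP0 : ∀ x y, 0 ≤ P x y)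
    (hPsum : ∀ x, Summable (P x))
    (hP1 : ∀ x, ∑' y, P x y ≤ 1)
    (U : Set Λ)
    (V : Λ → ℝ) (hV : ∀ x, 0 < V x)
    (ρ C K : ℝ) (hρ0 : 0 < ρ) (hρ1 : ρ < 1) (hC : 0 < C) (hK : 0 < K)
    (hVsum : ∀ x, Summable fun y => P x y * V y)
    -- (i) drift outside U
    (hdrift : ∀ x, x ∉ U → (∑' y, P x y * V y) ≤ ρ * V x)
    -- (ii) global bound
    (hbound : ∀ x, (∑' y, P x y * V y) ≤ C * V x)
    -- (iii) V is at least K outside U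
    (hVK : ∀ x, x ∉ U → K ≤ V x) :
    ∀ x, V x ≤ K → ∀ n : ℕ, 1 ≤ n → survive P U n x ≤ C * ρ ^ (n - 1) := by
  classical
  set Q : Λ → Λ → ℝ := fun x y => if y ∈ U then 0 else P x y with hQ
  have hQ0 : ∀ x y, 0 ≤ Q x y := by
    intro x y; simp only [hQ]; split <;> simp [hP0]
  have hQle : ∀ x y, Q x y ≤ P x y := by
    intro x y; simp only [hQ]; split <;> simp [hP0]
  have hQVsum : ∀ x, Summable fun y => Q x y * V y := by
    intro x
    refine (hVsum x).of_nonneg_of_le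
      (fun y => mul_nonneg (hQ0 x y) (hV y).le)
      (fun y => mul_le_mul_of_nonneg_right (hQle x y) (hV y).le)
  have hQVle : ∀ x, (∑' y, Q x y * V y) ≤ ∑' y, P x y * V y := by
    intro x
    exact Summable.tsum_le_tsum
      (fun y => mul_le_mul_of_nonneg_right (hQle x y) (hV y).le)
      (hQVsum x) (hVsum x)
  -- key: for all n, y ∉ U, survive n y ≤ ρ^n * V y / K
  have key : ∀ n : ℕ, ∀ y, y ∉ U → survive P U n y ≤ ρ ^ n * V y / K := by
    intro n
    induction n with
    | zero =>
      intro y hy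
      simp only [survive, pow_zero, one_mul]
      rw [le_div_iff₀ hK, one_mul]
      exact hVK y hy
    | succ n ih =>
      intro y hy
      have hstep : ∀ x, survive P U (n + 1) x ≤ ρ ^ n / K * ∑' z, Q x z * V z := by
        intro x
        have hpt : ∀ z, Q x z * survive P U n z ≤ ρ ^ n / K * (Q x z * V z) := by
          intro z
          by_cases hz : z ∈ U
          · simp only [hQ, if_pos hz, zero_mul, mul_zero]; exact le_refl 0
          · calc Q x z * survive P U n z ≤ Q x z * (ρ ^ n * V z / K) :=
                  mul_le_mul_of_nonneg_left (ih z hz) (hQ0 x z)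
              _ = ρ ^ n / K * (Q x z * V z) := by ring
        have hsum2 : Summable fun z => ρ ^ n / K * (Q x z * V z) := (hQVsum x).mul_left _
        have hsum1 : Summable fun z => Q x z * survive P U n z :=
          hsum2.of_nonneg_of_le
            (fun z => mul_nonneg (hQ0 x z) (survive_nonneg P U hP0 n z)) hpt
        calc survive P U (n + 1) x = ∑' z, Q x z * survive P U n z := rfl
          _ ≤ ∑' z, ρ ^ n / K * (Q x z * V z) := Summable.tsum_le_tsum hpt hsum1 hsum2
          _ = ρ ^ n / K * ∑' z, Q x z * V z := tsum_mul_left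
      calc survive P U (n + 1) y ≤ ρ ^ n / K * ∑' z, Q y z * V z := hstep y
        _ ≤ ρ ^ n / K * (ρ * V y) := by
            apply mul_le_mul_of_nonneg_left _ (by positivity)
            exact le_trans (hQVle y) (hdrift y hy)
        _ = ρ ^ (n + 1) * V y / K := by ring
  -- final
  intro x hx n hn
  obtain ⟨m, rfl⟩ : ∃ m, n = m + 1 := ⟨n - 1, (Nat.succ_pred_eq_of_pos hn).symm⟩
  have hpt : ∀ z, Q x z * survive P U m z ≤ ρ ^ m / K * (Q x z * V z) := by
    intro z
    by_cases hz : z ∈ U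
    · simp only [hQ, if_pos hz, zero_mul, mul_zero]; exact le_refl 0
    · calc Q x z * survive P U m z ≤ Q x z * (ρ ^ m * V z / K) :=
            mul_le_mul_of_nonneg_left (key m z hz) (hQ0 x z)
        _ = ρ ^ m / K * (Q x z * V z) := by ring
  have hsum2 : Summable fun z => ρ ^ m / K * (Q x z * V z) := (hQVsum x).mul_left _
  have hsum1 : Summable fun z => Q x z * survive P U m z :=
    hsum2.of_nonneg_of_le
      (fun z => mul_nonneg (hQ0 x z) (survive_nonneg P U hP0 m z)) hpt
  have : survive P U (m + 1) x ≤ ρ ^ m / K * (C * V x) := by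
    calc survive P U (m + 1) x = ∑' z, Q x z * survive P U m z := rfl
      _ ≤ ∑' z, ρ ^ m / K * (Q x z * V z) := Summable.tsum_le_tsum hpt hsum1 hsum2
      _ = ρ ^ m / K * ∑' z, Q x z * V z := tsum_mul_left
      _ ≤ ρ ^ m / K * (C * V x) :=
          mul_le_mul_of_nonneg_left (le_trans (hQVle x) (hbound x)) (by positivity)
  calc survive P U (m + 1) x ≤ ρ ^ m / K * (C * V x) := this
    _ ≤ ρ ^ m / K * (C * K) := by
        apply mul_le_mul_of_nonneg_left _ (by positivity)
        exact mul_le_mul_of_nonneg_left hx hC.le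
    _ = C * ρ ^ (m + 1 - 1) := by field_simp; ring_nf; simp
end

section
/- Let Λ be a countable set, (Ω, F, P) a probability space, and (Z_n)_{n≥0} measurable random elements of the set of finitely supported functions Λ → ℕ, with the absorption property: if Z_n(ω) = 0 (the zero function) then Z_m(ω) = 0 for all m ≥ n. Let Ω_surv := {ω : Z_n(ω) ≠ 0 for all n ≥ 0}. Let s ∈ [0,1]^Λ and suppose that the expectation E[∏_{w ∈ supp Z_n} s_w^{Z_n(w)}] equals a constant c independent of n. Suppose moreover there is y ∈ Λ with s_y < 1 such that P({Z_n(y) ≤ K} ∩ Ω_surv) → 0 as n → ∞ for every K ∈ ℕ. Then c = P(Ω_surv^c). (This is the identification, in the proof of Corollary 3.2, of any fixed-point value s_x of the generating function with the extinction probability.) -/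
open Filter Topology MeasureTheory

/-- if the expectation `E[∏_{w ∈ supp Zₙ} s_w^{Zₙ(w)}]` is a constant
`c` independent of `n`, absorption at `0` holds, and some coordinate `y` with `s_y < 1`
tends to infinity in probability on the survival event, then `c` equals the probability
of the extinction event `Ω_surv^c`. -/
theorem fixed_point_value_is_extinction_probability
    {Λ : Type*} [Countable Λ]
    {Ω : Type*} [MeasurableSpace Ω] (P : Measure Ω) [IsProbabilityMeasure P]
    (Z : ℕ → Ω → (Λ →₀ ℕ))
    -- measurability of the random elements Zₙ
    (hZmeas : ∀ n, ∀ A : Set (Λ →₀ ℕ), MeasurableSet (Z n ⁻¹' A))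
    -- absorption: once extinct, always extinct
    (habs : ∀ ω, ∀ n m : ℕ, n ≤ m → Z n ω = 0 → Z m ω = 0)
    (s : Λ → ℝ) (hs : ∀ y, s y ∈ Set.Icc (0 : ℝ) 1)
    (c : ℝ)
    -- the expectation is constant in n
    (hc : ∀ n : ℕ, (∫ ω, (∏ w ∈ (Z n ω).support, s w ^ (Z n ω w)) ∂P) = c)
    (y : Λ) (hsy : s y < 1)
    -- on the survival event, Zₙ(y) → ∞ in probability
    (hgrow : ∀ K : ℕ,
      Tendsto (fun n : ℕ =>
          P ({ω | Z n ω y ≤ K} ∩ {ω | ∀ m : ℕ, Z m ω ≠ 0})) atTop (𝓝 0)) :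
    c = (P ({ω | ∀ m : ℕ, Z m ω ≠ 0}ᶜ)).toReal := by
  classical
  set f : ℕ → Ω → ℝ := fun n ω => ∏ w ∈ (Z n ω).support, s w ^ (Z n ω w) with hf
  set S : Set Ω := {ω | ∀ m : ℕ, Z m ω ≠ 0} with hSdef
  -- basic facts
  have hS : MeasurableSet S := by
    have : S = ⋂ m : ℕ, (Z m ⁻¹' {0})ᶜ := by
      ext ω; simp [hSdef, Set.mem_iInter]
    rw [this]
    exact MeasurableSet.iInter fun m => (hZmeas m {0}).compl
  have hf0 : ∀ n ω, 0 ≤ f n ω := fun n ω =>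
    Finset.prod_nonneg fun w _ => pow_nonneg (hs w).1 _
  have hf1 : ∀ n ω, f n ω ≤ 1 :=
    fun n ω => Finset.prod_le_one (fun w _ => pow_nonneg (hs w).1 _)
      (fun w _ => pow_le_one₀ (hs w).1 (hs w).2)
  have hfmeas : ∀ n, Measurable (f n) := by
    intro n
    letI : MeasurableSpace (Λ →₀ ℕ) := ⊤
    have hZ : Measurable (Z n) := fun A _ => hZmeas n A
    exact (measurable_from_top
      (f := fun η : Λ →₀ ℕ => ∏ w ∈ η.support, s w ^ (η w))).comp hZ
  have hfint : ∀ n, Integrable (f n) P := by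
    intro n
    refine (integrable_const (1 : ℝ)).mono' (hfmeas n).aestronglyMeasurable ?_
    filter_upwards with ω
    rw [Real.norm_eq_abs, abs_of_nonneg (hf0 n ω)]
    exact hf1 n ω
  -- the key pointwise bound via coordinate y
  have hkey : ∀ n ω, f n ω ≤ s y ^ (Z n ω y) := by
    intro n ω
    by_cases hy : Z n ω y = 0
    · rw [hy, pow_zero]; exact hf1 n ω
    · have hmem : y ∈ (Z n ω).support := Finsupp.mem_support_iff.mpr hy
      show (∏ w ∈ (Z n ω).support, s w ^ (Z n ω w)) ≤ s y ^ (Z n ω y)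
      rw [← Finset.mul_prod_erase _ _ hmem]
      calc s y ^ (Z n ω y) * ∏ w ∈ (Z n ω).support.erase y, s w ^ (Z n ω w)
          ≤ s y ^ (Z n ω y) * 1 := by
            refine mul_le_mul_of_nonneg_left ?_ (pow_nonneg (hs y).1 _)
            exact Finset.prod_le_one (fun w _ => pow_nonneg (hs w).1 _)
              (fun w _ => pow_le_one₀ (hs w).1 (hs w).2)
        _ = s y ^ (Z n ω y) := mul_one _
  -- Part A : on the extinction set Sᶜ, the integral tends to P(Sᶜ)
  have hA : Tendsto (fun n => ∫ ω in Sᶜ, f n ω ∂P) atTop (𝓝 ((P Sᶜ).toReal)) := by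
    have hlim : ∀ᵐ ω ∂(P.restrict Sᶜ),
        Tendsto (fun n => f n ω) atTop (𝓝 (1 : ℝ)) := by
      rw [ae_restrict_iff' hS.compl]
      filter_upwards with ω hω
      simp only [hSdef, Set.mem_compl_iff, Set.mem_setOf_eq, not_forall, not_not] at hω
      obtain ⟨m, hm⟩ := hω
      refine tendsto_atTop_of_eventually_const (i₀ := m) fun n hn => ?_
      have : Z n ω = 0 := habs ω m n hn hm
      simp [hf, this]
    have := MeasureTheory.tendsto_integral_of_dominated_convergence
      (fun _ => (1 : ℝ)) (fun n => (hfmeas n).aestronglyMeasurable.restrict)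
      (integrable_const 1)
      (fun n => by
        filter_upwards with ω
        rw [Real.norm_eq_abs, abs_of_nonneg (hf0 n ω)]; exact hf1 n ω)
      hlim
    simpa [Measure.real] using this
  -- Part B : on the survival set S, the integral tends to 0
  have hB : Tendsto (fun n => ∫ ω in S, f n ω ∂P) atTop (𝓝 (0 : ℝ)) := by
    rw [Metric.tendsto_atTop]
    intro ε hε
    -- choose K with (s y)^K < ε/2
    obtain ⟨K, hK⟩ : ∃ K : ℕ, s y ^ K < ε / 2 := by
      have h0 : |s y| < 1 := abs_lt.mpr ⟨lt_of_lt_of_le neg_one_lt_zero (hs y).1, hsy⟩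
      have := tendsto_pow_atTop_nhds_zero_of_abs_lt_one h0
      have h2 := (this.eventually (eventually_lt_nhds (by linarith : (0:ℝ) < ε / 2))).exists
      exact h2
    have hKnn : 0 ≤ s y ^ K := pow_nonneg (hs y).1 _
    -- eventually the bad set is small
    have hsmall : ∀ᶠ n in atTop,
        (P ({ω | Z n ω y ≤ K} ∩ S)).toReal < ε / 2 := by
      have := (hgrow K).eventually
        (eventually_lt_nhds (by positivity : (0:ENNReal) < ENNReal.ofReal (ε / 2)))
      filter_upwards [this] with n hn
      calc (P ({ω | Z n ω y ≤ K} ∩ S)).toReal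
          < (ENNReal.ofReal (ε / 2)).toReal :=
            ENNReal.toReal_strict_mono ENNReal.ofReal_ne_top hn
        _ ≤ ε / 2 := by rw [ENNReal.toReal_ofReal (by linarith)]
    rw [← eventually_atTop]
    filter_upwards [hsmall] with n hn
    set A : Set Ω := {ω | Z n ω y ≤ K} with hAdef
    have hAmeas : MeasurableSet A := by
      have : A = Z n ⁻¹' {η | η y ≤ K} := rfl
      rw [this]; exact hZmeas n _
    -- split the integral over S into A and Aᶜ
    have hsplit : ∫ ω in S, f n ω ∂P
        = (∫ ω in A ∩ S, f n ω ∂P) + ∫ ω in Aᶜ ∩ S, f n ω ∂P := by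
      have h1 : (P.restrict S).restrict A = P.restrict (A ∩ S) :=
        Measure.restrict_restrict hAmeas
      have h2 : (P.restrict S).restrict Aᶜ = P.restrict (Aᶜ ∩ S) :=
        Measure.restrict_restrict hAmeas.compl
      rw [← integral_add_compl hAmeas ((hfint n).restrict : Integrable (f n) (P.restrict S)), h1, h2]
    have hb1 : ‖∫ ω in A ∩ S, f n ω ∂P‖ ≤ 1 * (P (A ∩ S)).toReal := by
      refine norm_setIntegral_le_of_norm_le_const (measure_lt_top _ _) ?_
      · intro ω _
        rw [Real.norm_eq_abs, abs_of_nonneg (hf0 n ω)]; exact hf1 n ω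
    have hb2 : ‖∫ ω in Aᶜ ∩ S, f n ω ∂P‖ ≤ s y ^ K * (P (Aᶜ ∩ S)).toReal := by
      refine norm_setIntegral_le_of_norm_le_const (measure_lt_top _ _) ?_
      · intro ω hω
        rw [Real.norm_eq_abs, abs_of_nonneg (hf0 n ω)]
        have hωA : ¬ Z n ω y ≤ K := hω.1
        calc f n ω ≤ s y ^ (Z n ω y) := hkey n ω
          _ ≤ s y ^ K := pow_le_pow_of_le_one (hs y).1 (hs y).2
              (le_of_lt (not_le.mp hωA))
    have hP2 : (P (Aᶜ ∩ S)).toReal ≤ 1 := by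
      have := prob_le_one (μ := P) (s := Aᶜ ∩ S)
      calc (P (Aᶜ ∩ S)).toReal ≤ (1 : ENNReal).toReal :=
            ENNReal.toReal_mono ENNReal.one_ne_top this
        _ = 1 := by simp
    have hnn : 0 ≤ ∫ ω in S, f n ω ∂P :=
      setIntegral_nonneg hS fun ω _ => hf0 n ω
    rw [Real.dist_eq, sub_zero, abs_of_nonneg hnn, hsplit]
    calc (∫ ω in A ∩ S, f n ω ∂P) + ∫ ω in Aᶜ ∩ S, f n ω ∂P
        ≤ ‖∫ ω in A ∩ S, f n ω ∂P‖ + ‖∫ ω in Aᶜ ∩ S, f n ω ∂P‖ :=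
          add_le_add (le_abs_self _) (le_abs_self _)
      _ ≤ 1 * (P (A ∩ S)).toReal + s y ^ K * (P (Aᶜ ∩ S)).toReal :=
          add_le_add hb1 hb2
      _ ≤ (P (A ∩ S)).toReal + s y ^ K * 1 := by
          rw [one_mul]
          exact add_le_add le_rfl (mul_le_mul_of_nonneg_left hP2 hKnn)
      _ < ε / 2 + ε / 2 := by
          rw [mul_one]
          exact add_lt_add hn hK
      _ = ε := by ring
  -- combine
  have hsum : Tendsto (fun n => ∫ ω, f n ω ∂P) atTop (𝓝 ((P Sᶜ).toReal)) := by
    have : (fun n => ∫ ω, f n ω ∂P)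
        = fun n => (∫ ω in S, f n ω ∂P) + ∫ ω in Sᶜ, f n ω ∂P := by
      funext n
      rw [integral_add_compl hS (hfint n)]
    rw [this]
    simpa using hB.add hA
  have hconst : Tendsto (fun _ : ℕ => c) atTop (𝓝 ((P Sᶜ).toReal)) := by
    have : (fun n : ℕ => c) = fun n => ∫ ω, f n ω ∂P := by
      funext n; exact (hc n).symm
    rw [this]; exact hsum
  exact tendsto_nhds_unique tendsto_const_nhds hconst
end

section
/- With the tumor growth rates matrix à as in the context, suppose there exists V : Λ₀ → [0,∞) with V(0) = 0, V(x) > 0 for x ∈ Λ, such that: (i) {x ∈ Λ : V(x) ≤ M} is finite for every M > 0; (ii) Σ_{y∈Λ₀} q(x,y)V(y) is absolutely convergent for every x ∈ Λ; and (iii) {x ∈ Λ : Σ_{y∈Λ₀} q(x,y)V(y) ≥ −M V(x)} is finite for every M > 0 (i.e., the drift of V under Q tends to −∞ relative to V along the cofinite filter). Then for every x ∈ Λ the identity Σ_{y∈Λ} ã(x,y)V(y) = Σ_{y∈Λ₀} q(x,y)V(y) + β(x)V(1) − β̄ V(x) holds, and for every M > 0 the set {x ∈ Λ : Σ_{y∈Λ}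 ã(x,y)V(y) ≥ −M V(x)} is finite; that is, à satisfies the Lyapunov condition of the paper's Theorem 2.1. (This is the reduction in the proof of Proposition 3.3 under condition (1).) -/
open Filter Topology

/-- The killed mean-growth rates matrix of the tumor growth model:
`ã(x,y) = q(x,y) + β(x)·1{y=1} − β̄·1{y=x}` for `x, y ∈ Λ`, where the state space is
`Λ₀ = Λ ∪ {0}` (modelled as `Option Λ`, with `none` playing the role of the absorbing
state `0`), `one : Λ` is the distinguished state `1`, and `β̄ = ⨆ x, β x`. -/
noncomputable def atilde {Λ : Type*} [DecidableEq Λ]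
    (q : Option Λ → Option Λ → ℝ) (β : Λ → ℝ) (one : Λ) (x y : Λ) : ℝ :=
  q (some x) (some y) + (if y = one then β x else 0) - (if y = x then ⨆ x', β x' else 0)

/-- reduction in the proof of Proposition 3.3, condition (1):
if `V` is a Lyapunov function for the absorbed rates matrix `Q₀` whose drift tends to
`−∞` relative to `V`, then the drift identity
`Σ_{y∈Λ} ã(x,y)V(y) = Σ_{y∈Λ₀} q(x,y)V(y) + β(x)V(1) − β̄V(x)` holds and `Ã`
satisfies the same Lyapunov condition. -/
theorem tumor_lyapunov_reduction
    {Λ : Type*} [Countable Λ] [Infinite Λ] [DecidableEq Λ]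
    (q : Option Λ → Option Λ → ℝ)
    -- Q₀ is a rates matrix absorbed at 0 = none
    (hq_off : ∀ x y : Option Λ, x ≠ y → 0 ≤ q x y)
    (hq_row : ∀ x : Option Λ, HasSum (q x) 0)
    (hq_abs : ∀ y : Option Λ, q none y = 0)
    (one : Λ)
    (β : Λ → ℝ) (hβpos : ∀ x, 0 < β x) (hβbdd : BddAbove (Set.range β))
    (V : Option Λ → ℝ) (hV0 : V none = 0) (hVpos : ∀ x : Λ, 0 < V (some x))
    -- (i) sublevel sets of V are finite
    (hVfin : ∀ M : ℝ, 0 < M → {x : Λ | V (some x) ≤ M}.Finite)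
    -- (ii) the drift of V under Q is absolutely convergent
    (hVsum : ∀ x : Λ, Summable fun y : Option Λ => q (some x) y * V y)
    -- (iii) the drift of V under Q tends to −∞ relative to V
    (hdrift : ∀ M : ℝ, 0 < M →
      {x : Λ | -M * V (some x) ≤ ∑' y : Option Λ, q (some x) y * V y}.Finite) :
    (∀ x : Λ,
      (∑' y : Λ, atilde q β one x y * V (some y))
        = (∑' y : Option Λ, q (some x) y * V y) + β x * V (some one)
          - (⨆ x', β x') * V (some x)) ∧
    (∀ M : ℝ, 0 < M →
      {x : Λ | -M * V (some x) ≤ ∑' y : Λ, atilde q β one x y * V (some y)}.Finite) := by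
  classical
  set B := ⨆ x', β x' with hB
  have hβle : ∀ x, β x ≤ B := fun x => le_ciSup hβbdd x
  have hBpos : 0 < B := lt_of_lt_of_le (hβpos one) (hβle one)
  -- summability of the Λ-restriction of the Q-drift
  have hsumf : ∀ x : Λ, HasSum (fun y : Λ => q (some x) (some y) * V (some y))
      (∑' y : Option Λ, q (some x) y * V y) := by
    intro x
    have h0 : ∀ z : Option Λ, z ∉ Set.range (some : Λ → Option Λ) →
        q (some x) z * V z = 0 := by
      intro z hz
      have : z = none := by
        cases z with
        | none => rfl
        | some a => exact absurd ⟨a, rfl⟩ hz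
      simp [this, hV0]
    exact ((Option.some_injective Λ).hasSum_iff h0).2 ((hVsum x).hasSum)
  have key : ∀ x : Λ,
      (∑' y : Λ, atilde q β one x y * V (some y))
        = (∑' y : Option Λ, q (some x) y * V y) + β x * V (some one)
          - B * V (some x) := by
    intro x
    have h1 : HasSum (fun y : Λ => (if y = one then β x else 0) * V (some y))
        (β x * V (some one)) := by
      have := hasSum_ite_eq one (β x * V (some one))
      refine this.congr_fun fun y => ?_
      by_cases h : y = one <;> simp [h]
    have h2 : HasSum (fun y : Λ => (if y = x then B else 0) * V (some y))
        (B * V (some x)) := by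
      have := hasSum_ite_eq x (B * V (some x))
      refine this.congr_fun fun y => ?_
      by_cases h : y = x <;> simp [h]
    have h3 := ((hsumf x).add h1).sub h2
    have h4 : (fun y : Λ => q (some x) (some y) * V (some y)
        + (if y = one then β x else 0) * V (some y)
        - (if y = x then B else 0) * V (some y))
        = fun y : Λ => atilde q β one x y * V (some y) := by
      funext y; simp only [atilde, hB, add_mul, sub_mul]
    rw [h4] at h3
    exact h3.tsum_eq
  refine ⟨key, ?_⟩
  intro M hM
  set C := B * V (some one) with hC
  have hCpos : 0 < C := mul_pos hBpos (hVpos one)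
  have hsub : {x : Λ | -M * V (some x) ≤ ∑' y : Λ, atilde q β one x y * V (some y)}
      ⊆ {x : Λ | V (some x) ≤ C} ∪
        {x : Λ | -(M + 1) * V (some x) ≤ ∑' y : Option Λ, q (some x) y * V y} := by
    intro x hx
    simp only [Set.mem_setOf_eq] at hx
    rw [key x] at hx
    by_cases hVC : V (some x) ≤ C
    · exact Or.inl hVC
    · push_neg at hVC
      refine Or.inr ?_
      simp only [Set.mem_setOf_eq]
      have h1 : β x * V (some one) ≤ C := by
        have := hVpos one
        exact mul_le_mul_of_nonneg_right (hβle x) this.le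
      have h2 : 0 ≤ B * V (some x) := le_of_lt (mul_pos hBpos (hVpos x))
      nlinarith [hx, hVC]
  exact Set.Finite.subset (Set.Finite.union (hVfin C hCpos) (hdrift (M + 1) (by linarith)))
    hsub
end

section
/- Let Λ = {1, 2, 3, …} and let Q₀ be the rates matrix of a birth-and-death process absorbed at 0: q(x,x+1) = b(x) > 0 for x ≥ 1, q(x,x−1) = d(x) > 0 for x ≥ 2, q(1,0) = d(1) > 0, q(x,y) = 0 for all other y ≠ x, and q(x,x) = −(b(x)+d(x)). Let β : Λ → (0,∞) be bounded with β̄ := sup_x β(x), and let ã(x,y) := q(x,y) + β(x)·1{y=1} − β̄·1{y=x} for x, y ∈ Λ. Assume: (a) d is nondecreasing; (b) lim_{x→∞} b(x)/d(x) = ℓ for some ℓ < 1; and (c) Σ_{x=1}^∞ 1/d(x) < ∞. Then, with V(x) = x, lim_{x→∞} (Σ_{y∈Λ} ã(x,y)·y)/x = −∞; that is, à satisfies the Lyapunov condition of the paper's Theorem 2.1 with the linear Lyapunov function. (This is the key verification in the proof of Corollary 3.5.) -/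
open Filter Topology

/-- The rates matrix of a birth-and-death process on `ℕ` absorbed at `0`, with birth
rates `b` and death rates `d`: `q(x,x+1) = b(x)`, `q(x,x−1) = d(x)` (so `q(1,0) = d(1)`),
`q(x,x) = −(b(x)+d(x))` for `x ≥ 1`, and `q(0,·) = 0`. -/
noncomputable def qbd (b d : ℕ → ℝ) (x y : ℕ) : ℝ :=
  if x = 0 then 0
  else if y = x + 1 then b x
  else if y + 1 = x then d x
  else if y = x then -(b x + d x)
  else 0

/-- The killed mean-growth rates matrix `ã(x,y) = q(x,y) + β(x)·1{y=1} − β̄·1{y=x}`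
of the tumor growth model, for the birth-and-death rates `qbd b d`, where
`β̄ = sup_{x≥1} β(x)`. -/
noncomputable def atildeBD (b d β : ℕ → ℝ) (x y : ℕ) : ℝ :=
  qbd b d x y + (if y = 1 then β x else 0)
    - (if y = x then (⨆ x' : {n : ℕ // 1 ≤ n}, β (x' : ℕ)) else 0)

lemma tsum_ite_point (d' : ℝ) (a : ℕ) (ha : 1 ≤ a) :
    ∑' y : {n : ℕ // 1 ≤ n}, (if (y : ℕ) = a then d' else 0) = d' := by
  rw [tsum_eq_single (⟨a, ha⟩ : {n : ℕ // 1 ≤ n})]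
  · simp
  · intro y hy
    rw [if_neg]
    exact fun h => hy (Subtype.ext h)

lemma summable_ite_point (d' : ℝ) (a : ℕ) (ha : 1 ≤ a) :
    Summable (fun y : {n : ℕ // 1 ≤ n} => if (y : ℕ) = a then d' else 0) := by
  apply summable_of_ne_finset_zero (s := {(⟨a, ha⟩ : {n : ℕ // 1 ≤ n})})
  intro y hy
  rw [if_neg]
  intro h
  exact hy (Finset.mem_singleton.2 (Subtype.ext h))

lemma sum_eval (b d β : ℕ → ℝ) (x : ℕ) (hx : 2 ≤ x) :
    (∑' y : {n : ℕ // 1 ≤ n}, atildeBD b d β x (y : ℕ) * ((y : ℕ) : ℝ))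
      = b x - d x + β x - (⨆ x' : {n : ℕ // 1 ≤ n}, β (x' : ℕ)) * x := by
  set B := (⨆ x' : {n : ℕ // 1 ≤ n}, β (x' : ℕ)) with hB
  have hfun : (fun y : {n : ℕ // 1 ≤ n} => atildeBD b d β x (y : ℕ) * ((y : ℕ) : ℝ))
      = (fun y : {n : ℕ // 1 ≤ n} =>
          (if (y : ℕ) = x + 1 then b x * (x + 1 : ℝ) else 0)
          + (if (y : ℕ) = x - 1 then d x * ((x : ℝ) - 1) else 0)
          + (if (y : ℕ) = x then (-(b x + d x) - B) * x else 0)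
          + (if (y : ℕ) = 1 then β x else 0)) := by
    funext y
    obtain ⟨y, hy⟩ := y
    simp only [atildeBD, qbd]
    split_ifs <;> first
      | omega
      | (subst_vars; push_cast; ring)
  rw [hfun]
  have h1 : (1:ℕ) ≤ x + 1 := by omega
  have h2 : (1:ℕ) ≤ x - 1 := by omega
  have h3 : (1:ℕ) ≤ x := by omega
  rw [Summable.tsum_add (((summable_ite_point _ _ h1).add (summable_ite_point _ _ h2)).add
      (summable_ite_point _ _ h3)) (summable_ite_point _ _ (Nat.le_refl 1)),
    Summable.tsum_add ((summable_ite_point _ _ h1).add (summable_ite_point _ _ h2))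
      (summable_ite_point _ _ h3),
    Summable.tsum_add (summable_ite_point _ _ h1) (summable_ite_point _ _ h2),
    tsum_ite_point _ _ h1, tsum_ite_point _ _ h2, tsum_ite_point _ _ h3,
    tsum_ite_point _ _ (Nat.le_refl 1)]
  ring

lemma dx_div_x_atTop (d : ℕ → ℝ)
    (hd : ∀ x : ℕ, 1 ≤ x → 0 < d x)
    (hmono : ∀ x : ℕ, 1 ≤ x → d x ≤ d (x + 1))
    (hsum : Summable fun x : {n : ℕ // 1 ≤ n} => 1 / d x) :
    Tendsto (fun x : ℕ => d x / x) atTop atTop := by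
  have hmono' : ∀ a c : ℕ, 1 ≤ a → a ≤ c → d a ≤ d c := by
    intro a c ha hac
    induction c, hac using Nat.le_induction with
    | base => exact le_refl _
    | succ n hn ih => exact ih.trans (hmono n (ha.trans hn))
  set g : ℕ → ℝ := fun y => if 1 ≤ y then 1 / d y else 0 with hg
  have hgsum : Summable g := by
    have := (summable_subtype_iff_indicator (s := {n : ℕ | 1 ≤ n})
      (f := fun y => 1 / d y)).mp hsum
    refine this.congr fun y => ?_
    by_cases hy : 1 ≤ y <;> simp [Set.indicator, hy, hg]
  have hgnn : ∀ y, 0 ≤ g y := by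
    intro y
    simp only [hg]
    split_ifs with hy
    · exact le_of_lt (div_pos one_pos (hd y hy))
    · exact le_rfl
  have htail : Tendsto (fun n : ℕ => ∑' k, g (k + (n + 1))) atTop (𝓝 0) :=
    (tendsto_sum_nat_add g).comp (tendsto_add_atTop_nat 1)
  have hbound : ∀ n : ℕ, 1 ≤ n → (n : ℝ) / d (2 * n) ≤ ∑' k, g (k + (n + 1)) := by
    intro n hn
    have hd2n : 0 < d (2 * n) := hd _ (by omega)
    have h1 : (n : ℝ) / d (2 * n) = (Finset.range n).card • (1 / d (2 * n)) := by
      simp [div_eq_mul_inv, nsmul_eq_mul, one_div]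
    rw [h1]
    refine le_trans (Finset.card_nsmul_le_sum (Finset.range n)
      (fun k => g (k + (n + 1))) _ ?_) ?_
    · intro k hk
      have hk' : k < n := Finset.mem_range.mp hk
      have h1k : 1 ≤ k + (n + 1) := by omega
      show 1 / d (2 * n) ≤ g (k + (n + 1))
      have heq : g (k + (n + 1)) = 1 / d (k + (n + 1)) := by simp [hg, h1k]
      rw [heq]
      exact one_div_le_one_div_of_le (hd _ h1k) (hmono' _ _ h1k (by omega))
    · exact Summable.sum_le_tsum _ (fun k _ => hgnn _)
        ((summable_nat_add_iff (n + 1)).mpr hgsum)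
  have h2 : Tendsto (fun n : ℕ => (n : ℝ) / d (2 * n)) atTop (𝓝 0) := by
    refine squeeze_zero' ?_ ?_ htail
    · filter_upwards [eventually_ge_atTop 1] with n hn
      have := hd (2 * n) (by omega)
      positivity
    · filter_upwards [eventually_ge_atTop 1] with n hn using hbound n hn
  have h3 : Tendsto (fun x : ℕ => (x : ℝ) / d x) atTop (𝓝 0) := by
    have hdiv : Tendsto (fun x : ℕ => x / 2) atTop atTop :=
      tendsto_atTop_atTop.2 fun n => ⟨2 * n, fun a ha => by omega⟩
    have hcomp : Tendsto (fun x : ℕ => 4 * ((↑(x / 2) : ℝ) / d (2 * (x / 2)))) atTop (𝓝 0) := by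
      have := (h2.comp hdiv).const_mul 4
      simpa using this
    refine squeeze_zero' ?_ ?_ hcomp
    · filter_upwards [eventually_ge_atTop 1] with x hx
      have := hd x hx
      positivity
    · filter_upwards [eventually_ge_atTop 2] with x hx
      set n := x / 2 with hn
      have hn1 : 1 ≤ n := by omega
      have h2n : 2 * n ≤ x := by omega
      have hxle : x ≤ 4 * n := by omega
      have hdx : 0 < d x := hd x (by omega)
      have hd2n : 0 < d (2 * n) := hd _ (by omega)
      have hddle : d (2 * n) ≤ d x := hmono' _ _ (by omega) h2n
      calc (x : ℝ) / d x ≤ (x : ℝ) / d (2 * n) := by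
            apply div_le_div_of_nonneg_left (by positivity) hd2n hddle
        _ ≤ (4 * n : ℝ) / d (2 * n) := by
            apply div_le_div_of_nonneg_right ?_ hd2n.le
            exact_mod_cast hxle
        _ = 4 * ((n : ℝ) / d (2 * n)) := by ring
  have h4 : Tendsto (fun x : ℕ => (x : ℝ) / d x) atTop (𝓝[>] 0) := by
    refine tendsto_nhdsWithin_of_tendsto_nhds_of_eventually_within _ h3 ?_
    filter_upwards [eventually_ge_atTop 1] with x hx
    have := hd x hx
    have hx0 : (0:ℝ) < x := by exact_mod_cast hx
    exact div_pos hx0 this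
  have := h4.inv_tendsto_nhdsGT_zero
  refine this.congr' ?_
  filter_upwards [eventually_ge_atTop 1] with x hx
  simp [Pi.inv_apply, inv_div]

/-- key verification in the proof of Corollary 3.5: for the
birth-and-death tumor growth model with nondecreasing death rates, limiting birth/death
ratio `ℓ < 1`, and summable reciprocal death rates, the matrix `Ã` satisfies the Lyapunov
condition of Theorem 2.1 with the linear Lyapunov function `V(x) = x`:
`(Σ_{y∈Λ} ã(x,y)·y)/x → −∞` as `x → ∞`. -/
theorem tumor_birth_death_lyapunov
    (b d β : ℕ → ℝ)
    (hb : ∀ x : ℕ, 1 ≤ x → 0 < b x)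
    (hd : ∀ x : ℕ, 1 ≤ x → 0 < d x)
    (hβpos : ∀ x : ℕ, 1 ≤ x → 0 < β x)
    (hβbdd : BddAbove (Set.range fun x : {n : ℕ // 1 ≤ n} => β (x : ℕ)))
    -- (a) d is nondecreasing
    (hmono : ∀ x : ℕ, 1 ≤ x → d x ≤ d (x + 1))
    -- (b) b(x)/d(x) → ℓ < 1
    (ℓ : ℝ) (hℓ : ℓ < 1)
    (hratio : Tendsto (fun x : ℕ => b x / d x) atTop (𝓝 ℓ))
    -- (c) Σ_{x≥1} 1/d(x) < ∞
    (hsum : Summable fun x : {n : ℕ // 1 ≤ n} => 1 / d x) :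
    Tendsto
      (fun x : ℕ =>
        (∑' y : {n : ℕ // 1 ≤ n}, atildeBD b d β x (y : ℕ) * ((y : ℕ) : ℝ)) / x)
      atTop atBot := by
  set B := (⨆ x' : {n : ℕ // 1 ≤ n}, β (x' : ℕ)) with hB
  have hβle : ∀ x : ℕ, 1 ≤ x → β x ≤ B := fun x hx =>
    le_ciSup hβbdd (⟨x, hx⟩ : {n : ℕ // 1 ≤ n})
  have hBpos : 0 < B := lt_of_lt_of_le (hβpos 1 le_rfl) (hβle 1 le_rfl)
  set c : ℝ := (1 + ℓ) / 2 with hc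
  have hc1 : c < 1 := by rw [hc]; linarith
  have hℓc : ℓ < c := by rw [hc]; linarith
  have hdxx := dx_div_x_atTop d hd hmono hsum
  have hbd : ∀ᶠ x : ℕ in atTop, b x / d x < c := hratio.eventually_lt_const hℓc
  -- the comparison function
  have hmaj : Tendsto (fun x : ℕ => (c - 1) * (d x / x)) atTop atBot :=
    (tendsto_const_mul_atBot_of_neg (by linarith)).mpr hdxx
  refine tendsto_atBot_mono' atTop ?_ hmaj
  filter_upwards [hbd, eventually_ge_atTop 2] with x hbdx hx2
  rw [sum_eval b d β x hx2, ← hB]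
  have hx1 : (1:ℝ) ≤ x := by
    have : (2:ℝ) ≤ x := by exact_mod_cast hx2
    linarith
  have hx0 : (0:ℝ) < x := by linarith
  have hdx : 0 < d x := hd x (by omega)
  have hbx : b x ≤ c * d x := by
    rw [div_lt_iff₀ hdx] at hbdx
    linarith
  have hβx : β x ≤ B := hβle x (by omega)
  have hnum : b x - d x + β x - B * x ≤ (c - 1) * d x := by
    have hBx : B * 1 ≤ B * x := by
      apply mul_le_mul_of_nonneg_left ?_ hBpos.le
      exact hx1
    nlinarith
  calc (b x - d x + β x - B * x) / x ≤ ((c - 1) * d x) / x := by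
        apply div_le_div_of_nonneg_right hnum hx0.le
    _ = (c - 1) * (d x / x) := by ring
end
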